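/- For every integer n > 0, the sum over all weakly decreasing tuples (λ₁, λ₂, ..., λₙ) of nonnegative integers with λ₁ + λ₂ + ... + λₙ = n of the product C(λ₁,λ₂)·C(λ₂,λ₃)···C(λₙ,0) multiplied by λ₁ equals (n+1)·2^(n-2) as rational numbers; equivalently, 4 times this sum equals (n+1)·2^n. -/

import Mathlib

open Finset

/-- Weakly decreasing tuples `(λ₁,…,λₙ)` of nonnegative integers with `λ₁+⋯+λₙ = n`. -/
def partitionTuples (n : ℕ) : Finset (Fin n → ℕ) :=
  (Finset.Nat.antidiagonalTuple n n).filter fun t => ∀ i j : Fin n, i ≤ j → t j ≤ t i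

/-- The product `C(λ₁,λ₂)·C(λ₂,λ₃)⋯C(λₙ,0)` with the convention `λ_{n+1} = 0`. -/
def binomProd (n : ℕ) (t : Fin n → ℕ) : ℕ :=
  ∏ i : Fin n, Nat.choose (t i) (if h : (i : ℕ) + 1 < n then t ⟨(i : ℕ) + 1, h⟩ else 0)

/-- First entry of a tuple (0 for the empty tuple). -/
def fp (l : ℕ) (t : Fin l → ℕ) : ℕ := if h : 0 < l then t ⟨0, h⟩ else 0

/-- Weakly decreasing tuples of length `l`, sum `s`, all entries `≤ k`. -/
def PT (l s k : ℕ) : Finset (Fin l → ℕ) :=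
  (Fintype.piFinset fun _ => Finset.range (s+1)).filter
    fun t => (∑ i, t i) = s ∧ (∀ i j : Fin l, i ≤ j → t j ≤ t i) ∧ ∀ i, t i ≤ k

lemma mem_PT {l s k : ℕ} {t : Fin l → ℕ} :
    t ∈ PT l s k ↔ (∑ i, t i) = s ∧ (∀ i j : Fin l, i ≤ j → t j ≤ t i) ∧ ∀ i, t i ≤ k := by
  constructor
  · intro h
    exact (Finset.mem_filter.mp h).2
  · intro h
    refine Finset.mem_filter.mpr ⟨Fintype.mem_piFinset.mpr fun i => ?_, h⟩
    have := Finset.single_le_sum (f := t) (fun _ _ => Nat.zero_le _) (Finset.mem_univ i)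
    rw [Finset.mem_range]
    omega

lemma PT_zero (l k : ℕ) : PT l 0 k = {fun _ => 0} := by
  ext t
  simp only [mem_PT, Finset.mem_singleton]
  constructor
  · rintro ⟨hsum, -, -⟩
    funext i
    have := Finset.single_le_sum (f := t) (fun _ _ => Nat.zero_le _) (Finset.mem_univ i)
    omega
  · rintro rfl
    simp

lemma binomProd_zero_fun (l : ℕ) : binomProd l (fun _ => 0) = 1 := by
  unfold binomProd
  apply Finset.prod_eq_one
  intro i _
  split <;> simp

lemma binomProd_succ (l : ℕ) (t : Fin (l+1) → ℕ) :
    binomProd (l+1) t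
      = Nat.choose (t 0) (fp l (Fin.tail t)) * binomProd l (Fin.tail t) := by
  unfold binomProd
  rw [Fin.prod_univ_succ]
  congr 1
  · congr 1
    rcases Nat.eq_zero_or_pos l with rfl | hl
    · simp [fp]
    · have h0 : ((0 : Fin (l+1)) : ℕ) + 1 < l + 1 := by
        simp only [Fin.val_zero]
        omega
      rw [dif_pos h0, fp, dif_pos hl]
      rfl
  · apply Finset.prod_congr rfl
    intro i _
    have hc : ((i.succ : ℕ) + 1 < l + 1) ↔ ((i : ℕ) + 1 < l) := by
      simp [Fin.val_succ]
    by_cases h : (i : ℕ) + 1 < l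
    · rw [dif_pos (hc.mpr h), dif_pos h]
      rfl
    · rw [dif_neg (fun hh => h (hc.mp hh)), dif_neg h]
      rfl

lemma fp_ge_one {l s k : ℕ} {t : Fin (l+1) → ℕ} (ht : t ∈ PT (l+1) s k) (hs : 1 ≤ s) :
    1 ≤ fp (l+1) t := by
  obtain ⟨hsum, hdec, -⟩ := mem_PT.mp ht
  rw [fp, dif_pos (Nat.succ_pos l)]
  by_contra h
  have h0 : t ⟨0, Nat.succ_pos l⟩ = 0 := by omega
  have : ∀ i : Fin (l+1), t i = 0 := by
    intro i
    have := hdec ⟨0, Nat.succ_pos l⟩ i (Fin.zero_le i)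
    omega
  rw [Finset.sum_congr rfl (fun i _ => this i)] at hsum
  simp at hsum
  omega

lemma fp_le_sum {l s k : ℕ} {t : Fin (l+1) → ℕ} (ht : t ∈ PT (l+1) s k) :
    fp (l+1) t ≤ s := by
  obtain ⟨hsum, -, -⟩ := mem_PT.mp ht
  rw [fp, dif_pos (Nat.succ_pos l)]
  calc t ⟨0, Nat.succ_pos l⟩ ≤ ∑ i, t i :=
        Finset.single_le_sum (fun _ _ => Nat.zero_le _) (Finset.mem_univ _)
    _ = s := hsum

lemma peel (l s k : ℕ) (hs : 1 ≤ s) (w : ℕ → ℕ) :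
    ∑ t ∈ PT (l+1) s k, binomProd (l+1) t * w (fp (l+1) t)
      = ∑ a ∈ Finset.range (min k s), w (a+1) *
          ∑ t' ∈ PT l (s-(a+1)) (a+1), binomProd l t' * Nat.choose (a+1) (fp l t') := by
  have hmaps : ∀ t ∈ PT (l+1) s k, fp (l+1) t - 1 ∈ Finset.range (min k s) := by
    intro t ht
    have h1 := fp_ge_one ht hs
    have h2 := fp_le_sum ht
    have h3 : fp (l+1) t ≤ k := by
      obtain ⟨-, -, hb⟩ := mem_PT.mp ht
      rw [fp, dif_pos (Nat.succ_pos l)]; exact hb _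
    rw [Finset.mem_range]
    omega
  rw [← Finset.sum_fiberwise_of_maps_to hmaps]
  apply Finset.sum_congr rfl
  intro a ha
  rw [Finset.mem_range, lt_min_iff] at ha
  rw [Finset.mul_sum]
  refine Finset.sum_bij' (fun t _ => Fin.tail t) (fun t' _ => Fin.cons (a+1) t')
    ?_ ?_ ?_ ?_ ?_
  · -- hi : tail maps into PT l (s-(a+1)) (a+1)
    intro t ht
    have hfa := (Finset.mem_filter.mp ht).2
    have ht' := (Finset.mem_filter.mp ht).1
    have h1 := fp_ge_one ht' hs
    have hfp : fp (l+1) t = a + 1 := by omega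
    obtain ⟨hsum, hdec, hb⟩ := mem_PT.mp ht'
    have ht0 : t 0 = a + 1 := by
      rw [fp, dif_pos (Nat.succ_pos l)] at hfp
      exact hfp
    refine mem_PT.mpr ⟨?_, ?_, ?_⟩
    · show (∑ i : Fin l, Fin.tail t i) = s - (a+1)
      rw [Fin.sum_univ_succ] at hsum
      have he : (∑ i : Fin l, Fin.tail t i) = ∑ i : Fin l, t i.succ := rfl
      omega
    · intro i j hij
      exact hdec i.succ j.succ (Fin.succ_le_succ_iff.mpr hij)
    · intro i
      have := hdec 0 i.succ (Fin.zero_le _)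
      simpa [ht0, Fin.tail] using this
  · -- hj : cons maps into fiber
    intro t' ht'
    obtain ⟨hsum, hdec, hb⟩ := mem_PT.mp ht'
    have hfpc : fp (l+1) (Fin.cons (a+1) t') = a + 1 := by
      rw [fp, dif_pos (Nat.succ_pos l)]
      rfl
    refine Finset.mem_filter.mpr ⟨mem_PT.mpr ⟨?_, ?_, ?_⟩, by rw [hfpc]; omega⟩
    · rw [Fin.sum_univ_succ]
      simp only [Fin.cons_zero, Fin.cons_succ]
      omega
    · intro i j hij
      induction j using Fin.cases with
      | zero =>
        have : i = 0 := le_antisymm hij (Fin.zero_le i)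
        rw [this]
      | succ j' =>
        induction i using Fin.cases with
        | zero =>
          simp only [Fin.cons_zero, Fin.cons_succ]
          exact le_trans (hb j') (le_refl _)
        | succ i' =>
          simp only [Fin.cons_succ]
          exact hdec i' j' (Fin.succ_le_succ_iff.mp hij)
    · intro i
      refine Fin.cases ?_ (fun i' => ?_) i
      · simpa using ha.1
      · simp only [Fin.cons_succ]
        exact le_trans (hb i') (by omega)
  · -- left inverse
    intro t ht
    have ht' := (Finset.mem_filter.mp ht).1
    have hfa := (Finset.mem_filter.mp ht).2
    have h1 := fp_ge_one ht' hs
    have ht0 : t 0 = a + 1 := by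
      have hfp : fp (l+1) t = a + 1 := by omega
      rw [fp, dif_pos (Nat.succ_pos l)] at hfp
      exact hfp
    show Fin.cons (a+1) (Fin.tail t) = t
    rw [← ht0]
    exact Fin.cons_self_tail t
  · -- right inverse
    intro t' _
    exact Fin.tail_cons _ _
  · -- values
    intro t ht
    have ht' := (Finset.mem_filter.mp ht).1
    have hfa := (Finset.mem_filter.mp ht).2
    have h1 := fp_ge_one ht' hs
    have hfp : fp (l+1) t = a + 1 := by omega
    have ht0 : t 0 = a + 1 := by
      rw [fp, dif_pos (Nat.succ_pos l)] at hfp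
      exact hfp
    show binomProd (l+1) t * w (fp (l+1) t)
        = w (a+1) * (binomProd l (Fin.tail t) * Nat.choose (a+1) (fp l (Fin.tail t)))
    rw [binomProd_succ, hfp, ht0]
    ring

lemma vander (s j : ℕ) (h1 : 1 ≤ j) (h2 : j ≤ s) :
    (if s - j = 0 then 1 else
        ∑ a ∈ Finset.range (min j (s-j)), Nat.choose j (a+1) * Nat.choose (s-j-1) a)
      = Nat.choose (s-1) (j-1) := by
  rcases eq_or_lt_of_le h2 with rfl | hlt
  · simp [Nat.choose_self]
  · have hd : 1 ≤ s - j := by omega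
    rw [if_neg (by omega)]
    set d := s - j with hdef
    have hsj : s - 1 = j + (d - 1) := by omega
    rw [hsj, Nat.add_choose_eq,
      Finset.Nat.sum_antidiagonal_eq_sum_range_succ
        (fun x y => Nat.choose j x * Nat.choose (d-1) y)]
    have hj1 : (j - 1).succ = j := by omega
    rw [hj1]
    rw [← Finset.sum_range_reflect
      (fun x => Nat.choose j x * Nat.choose (d-1) (j-1-x)) j]
    have hext : ∑ a ∈ Finset.range (min j d), Nat.choose j (a+1) * Nat.choose (d-1) a
        = ∑ a ∈ Finset.range j, Nat.choose j (a+1) * Nat.choose (d-1) a := by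
      rcases le_or_gt j d with h | h
      · rw [min_eq_left h]
      · rw [min_eq_right (le_of_lt h)]
        apply Finset.sum_subset (Finset.range_subset_range.mpr (le_of_lt h))
        intro a _ ha
        rw [Finset.mem_range, not_lt] at ha
        rw [Nat.choose_eq_zero_of_lt (show d - 1 < a by omega), mul_zero]
    rw [hext]
    apply Finset.sum_congr rfl
    intro a ha
    rw [Finset.mem_range] at ha
    have e2 : j - 1 - (j - 1 - a) = a := by omega
    rw [e2]
    congr 1
    rw [← Nat.choose_symm (by omega : a + 1 ≤ j)]
    congr 1
    omega

lemma key : ∀ s l k m : ℕ, s ≤ l →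
    ∑ t ∈ PT l s k, binomProd l t * Nat.choose m (fp l t)
      = if s = 0 then 1 else
          ∑ a ∈ Finset.range (min k s), Nat.choose m (a+1) * Nat.choose (s-1) a := by
  intro s
  induction s using Nat.strong_induction_on with
  | _ s IH =>
    intro l k m hsl
    rcases Nat.eq_zero_or_pos s with rfl | hs
    · rw [if_pos rfl, PT_zero, Finset.sum_singleton, binomProd_zero_fun, one_mul,
        show fp l (fun _ => 0) = 0 by unfold fp; split <;> rfl, Nat.choose_zero_right]
    · obtain ⟨l', rfl⟩ : ∃ l', l = l' + 1 := ⟨l - 1, by omega⟩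
      rw [if_neg (by omega)]
      rw [peel l' s k hs (fun x => Nat.choose m x)]
      apply Finset.sum_congr rfl
      intro a ha
      rw [Finset.mem_range, lt_min_iff] at ha
      rw [IH (s - (a+1)) (by omega) l' (a+1) (a+1) (by omega)]
      have := vander s (a+1) (by omega) (by omega)
      simp only [Nat.add_sub_cancel] at this
      rw [this]

lemma sum_id_mul_choose (m : ℕ) :
    2 * ∑ a ∈ Finset.range (m+1), a * Nat.choose m a = m * 2 ^ m := by
  rcases Nat.eq_zero_or_pos m with rfl | hm
  · simp
  · obtain ⟨m', rfl⟩ : ∃ m', m = m' + 1 := ⟨m - 1, by omega⟩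
    have h1 : ∑ a ∈ Finset.range (m'+2), a * Nat.choose (m'+1) a
        = ∑ a ∈ Finset.range (m'+1), (a+1) * Nat.choose (m'+1) (a+1) := by
      rw [Finset.sum_range_succ' (fun a => a * Nat.choose (m'+1) a) (m'+1)]
      simp
    have h2 : ∀ a, (a+1) * Nat.choose (m'+1) (a+1) = (m'+1) * Nat.choose m' a := by
      intro a
      rw [mul_comm ((a:ℕ)+1)]
      exact (Nat.add_one_mul_choose_eq m' a).symm
    rw [h1, Finset.sum_congr rfl (fun a _ => h2 a), ← Finset.mul_sum,
      Nat.sum_range_choose]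
    ring

theorem stmt2 (n : ℕ) (hn : 0 < n) :
    4 * ∑ t ∈ partitionTuples n, binomProd n t * t ⟨0, hn⟩ = (n + 1) * 2 ^ n := by
  obtain ⟨l, rfl⟩ : ∃ l, n = l + 1 := ⟨n - 1, by omega⟩
  have hPT : partitionTuples (l+1) = PT (l+1) (l+1) (l+1) := by
    ext t
    simp only [partitionTuples, Finset.mem_filter, Finset.Nat.mem_antidiagonalTuple, mem_PT]
    constructor
    · rintro ⟨hsum, hdec⟩
      refine ⟨hsum, hdec, fun i => ?_⟩
      have := Finset.single_le_sum (f := t) (fun _ _ => Nat.zero_le _) (Finset.mem_univ i)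
      omega
    · rintro ⟨hsum, hdec, -⟩
      exact ⟨hsum, hdec⟩
  have hfp : ∀ t : Fin (l+1) → ℕ, t ⟨0, hn⟩ = fp (l+1) t := by
    intro t
    rw [fp, dif_pos (Nat.succ_pos l)]
  rw [hPT]
  rw [Finset.sum_congr rfl (fun t _ => by rw [hfp t])]
  rw [peel l (l+1) (l+1) (by omega) (fun x => x)]
  have hmain : ∀ a ∈ Finset.range (min (l+1) (l+1)),
      (a+1) * ∑ t' ∈ PT l (l+1-(a+1)) (a+1), binomProd l t' * Nat.choose (a+1) (fp l t')
        = (a+1) * Nat.choose l a := by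
    intro a ha
    rw [Finset.mem_range, lt_min_iff] at ha
    rw [key (l+1-(a+1)) l (a+1) (a+1) (by omega)]
    have := vander (l+1) (a+1) (by omega) (by omega)
    simp only [Nat.add_sub_cancel] at this
    rw [this]
  rw [Finset.sum_congr rfl hmain]
  rw [min_self]
  -- 4 * ∑_{a ∈ range (l+1)} (a+1) * C l a = (l+2) * 2^(l+1)
  have hsplit : ∑ a ∈ Finset.range (l+1), (a+1) * Nat.choose l a
      = (∑ a ∈ Finset.range (l+1), a * Nat.choose l a) + 2 ^ l := by
    rw [← Nat.sum_range_choose l, ← Finset.sum_add_distrib]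
    apply Finset.sum_congr rfl
    intro a _
    ring
  rw [hsplit]
  have h2 := sum_id_mul_choose l
  have : 4 * ((∑ a ∈ Finset.range (l+1), a * Nat.choose l a) + 2 ^ l)
      = 2 * (2 * ∑ a ∈ Finset.range (l+1), a * Nat.choose l a) + 4 * 2 ^ l := by ring
  rw [this, h2]
  ring
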